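/- arXiv:2602.03602 — 2 statements merged into one kernel-verified Lean document; each statement's English description precedes it below -/
import Mathlib

section
/- The Laplacian matrix of the contracted multigraph K_{n_1,...,n_s}/F equals diag(α_1,...,α_c) + Nᵀ(I_s − J_s)N, where N is the s×c matrix with entries n_{ip}, J_s is the s×s all-ones matrix, and α_p = n·m_p − Σ_i n_i·n_{ip}. -/
open Finset

/-- `m_p = |V(T_p)|`: the number of vertices of `K_{n_1,…,n_s}` lying in the `p`-th component
of a spanning forest, where `comp` sends each vertex to the index of its component. -/
noncomputable def mP {s c : ℕ} (n : Fin s → ℕ) (comp : (Σ i, Fin (n i)) → Fin c)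
    (p : Fin c) : ℕ :=
  Nat.card {v : Σ i, Fin (n i) // comp v = p}

/-- `n_{ip} = |X_i ∩ V(T_p)|`: the number of vertices of the `i`-th partition class lying in
the `p`-th component. -/
noncomputable def nIP {s c : ℕ} (n : Fin s → ℕ) (comp : (Σ i, Fin (n i)) → Fin c)
    (i : Fin s) (p : Fin c) : ℕ :=
  Nat.card {v : Σ i, Fin (n i) // v.1 = i ∧ comp v = p}

/-- `α_p = n·m_p − Σ_i n_i·n_{ip}` (as a real number). -/
noncomputable def alphaR {s c : ℕ} (n : Fin s → ℕ) (comp : (Σ i, Fin (n i)) → Fin c)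
    (p : Fin c) : ℝ :=
  (∑ i, (n i : ℝ)) * (mP n comp p) - ∑ i, (n i : ℝ) * (nIP n comp i p)

/-- The number of edges of `K_{n_1,…,n_s}` with one endpoint in component `p` and the other in
component `q` (for `p ≠ q`), counted as ordered pairs with first coordinate in `T_p`. -/
noncomputable def wPQ {s c : ℕ} (n : Fin s → ℕ) (comp : (Σ i, Fin (n i)) → Fin c)
    (p q : Fin c) : ℕ :=
  Nat.card {uv : (Σ i, Fin (n i)) × (Σ i, Fin (n i)) //
    comp uv.1 = p ∧ comp uv.2 = q ∧
      (SimpleGraph.completeMultipartiteGraph (fun i => Fin (n i))).Adj uv.1 uv.2}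

/-- The Laplacian matrix of the contracted multigraph `K_{n_1,…,n_s}/F`: diagonal entries are
the degrees (with multiplicity), off-diagonal entries are minus the edge multiplicities. -/
noncomputable def LapCon {s c : ℕ} (n : Fin s → ℕ) (comp : (Σ i, Fin (n i)) → Fin c) :
    Matrix (Fin c) (Fin c) ℝ :=
  Matrix.of fun p q =>
    if p = q then ∑ q' ∈ Finset.univ.erase p, (wPQ n comp p q' : ℝ) else -(wPQ n comp p q : ℝ)


section
variable {s c : ℕ} (n : Fin s → ℕ) (comp : (Σ i, Fin (n i)) → Fin c)

lemma nIP_eq [DecidableEq (Fin c)] (i : Fin s) (p : Fin c) :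
    nIP n comp i p =
      (Finset.univ.filter (fun v : Σ i, Fin (n i) => v.1 = i ∧ comp v = p)).card := by
  rw [nIP, Nat.card_eq_fintype_card, Fintype.card_subtype]

lemma mP_eq [DecidableEq (Fin c)] (p : Fin c) :
    mP n comp p = (Finset.univ.filter (fun v : Σ i, Fin (n i) => comp v = p)).card := by
  rw [mP, Nat.card_eq_fintype_card, Fintype.card_subtype]

lemma mP_sum (p : Fin c) : mP n comp p = ∑ i, nIP n comp i p := by
  classical
  rw [mP_eq]
  rw [Finset.card_eq_sum_card_fiberwise (f := fun v : Σ i, Fin (n i) => v.1)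
    (t := Finset.univ) (fun x _ => Finset.mem_univ _)]
  refine Finset.sum_congr rfl fun i _ => ?_
  rw [nIP_eq, Finset.filter_filter]
  congr 1
  ext v
  simp only [Finset.mem_filter]
  tauto

lemma class_card (i : Fin s) :
    (Finset.univ.filter (fun v : Σ i, Fin (n i) => v.1 = i)).card = n i := by
  classical
  rw [show (Finset.univ.filter (fun v : Σ i, Fin (n i) => v.1 = i)) =
      (Finset.univ : Finset (Fin (n i))).map
        ⟨fun x => ⟨i, x⟩, fun a b h => by cases h; rfl⟩ from ?_]
  · simp
  · ext ⟨j, x⟩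
    simp only [Finset.mem_filter, Finset.mem_univ, true_and, Finset.mem_map,
      Function.Embedding.coeFn_mk]
    constructor
    · rintro rfl; exact ⟨x, rfl⟩
    · rintro ⟨y, h⟩
      exact (congrArg Sigma.fst h).symm

lemma nIP_sum (i : Fin s) : ∑ p, nIP n comp i p = n i := by
  classical
  rw [← class_card n i,
    Finset.card_eq_sum_card_fiberwise (f := comp) (t := Finset.univ) (fun x _ => Finset.mem_univ _)]
  refine Finset.sum_congr rfl fun p _ => ?_
  rw [nIP_eq, Finset.filter_filter]

lemma wPQ_key (p q : Fin c) :
    wPQ n comp p q + ∑ i, nIP n comp i p * nIP n comp i q = mP n comp p * mP n comp q := by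
  classical
  have hw : wPQ n comp p q =
      (((Finset.univ.filter (fun v : Σ i, Fin (n i) => comp v = p)) ×ˢ
        (Finset.univ.filter (fun v : Σ i, Fin (n i) => comp v = q))).filter
          (fun uv => uv.1.1 ≠ uv.2.1)).card := by
    rw [wPQ, Nat.card_eq_fintype_card, Fintype.card_subtype]
    congr 1
    ext uv
    simp only [Finset.mem_filter, Finset.mem_product, Finset.mem_univ, true_and,
      SimpleGraph.completeMultipartiteGraph, SimpleGraph.comap_adj, SimpleGraph.top_adj]
    tauto
  have hsame : ((((Finset.univ.filter (fun v : Σ i, Fin (n i) => comp v = p)) ×ˢ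
        (Finset.univ.filter (fun v : Σ i, Fin (n i) => comp v = q)))).filter
          (fun uv => uv.1.1 = uv.2.1)).card =
      ∑ i, nIP n comp i p * nIP n comp i q := by
    rw [Finset.card_eq_sum_card_fiberwise
      (f := fun uv : (Σ i, Fin (n i)) × (Σ i, Fin (n i)) => uv.1.1)
      (t := Finset.univ) (fun x _ => Finset.mem_univ _)]
    refine Finset.sum_congr rfl fun i _ => ?_
    rw [Finset.filter_filter, nIP_eq, nIP_eq, ← Finset.card_product]
    congr 1
    ext uv
    simp only [Finset.mem_filter, Finset.mem_product, Finset.mem_univ, true_and]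
    constructor
    · rintro ⟨⟨h1, h2⟩, h3, h4⟩
      exact ⟨⟨h4, h1⟩, h3 ▸ h4, h2⟩
    · rintro ⟨⟨h1, h2⟩, h3, h4⟩
      exact ⟨⟨h2, h4⟩, h1.trans h3.symm, h1⟩
  have hsplit := Finset.card_filter_add_card_filter_not
    (s := (Finset.univ.filter (fun v : Σ i, Fin (n i) => comp v = p)) ×ˢ
        (Finset.univ.filter (fun v : Σ i, Fin (n i) => comp v = q)))
    (p := fun uv => uv.1.1 ≠ uv.2.1)
  simp only [not_not] at hsplit
  rw [hw, ← hsame, mP_eq, mP_eq, ← Finset.card_product]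
  exact hsplit

end

section
variable {s c : ℕ} (n : Fin s → ℕ) (comp : (Σ i, Fin (n i)) → Fin c)

lemma mP_real (p : Fin c) : (mP n comp p : ℝ) = ∑ i, (nIP n comp i p : ℝ) := by
  rw [mP_sum]; push_cast; rfl

lemma nIP_real (i : Fin s) : ∑ p, (nIP n comp i p : ℝ) = (n i : ℝ) := by
  rw [← nIP_sum n comp i]; push_cast; rfl

lemma mP_total : ∑ q, (mP n comp q : ℝ) = ∑ i, (n i : ℝ) := by
  simp_rw [mP_real]
  rw [Finset.sum_comm]
  simp_rw [nIP_real]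

lemma wPQ_real (p q : Fin c) :
    (wPQ n comp p q : ℝ) =
      (mP n comp p : ℝ) * (mP n comp q : ℝ) -
        ∑ i, (nIP n comp i p : ℝ) * (nIP n comp i q : ℝ) := by
  have h := wPQ_key n comp p q
  have h2 : ((wPQ n comp p q : ℝ) + ∑ i, (nIP n comp i p : ℝ) * (nIP n comp i q : ℝ)) =
      (mP n comp p : ℝ) * (mP n comp q : ℝ) := by
    exact_mod_cast congrArg (Nat.cast : ℕ → ℝ) h
  linarith

lemma entry_eq (p q : Fin c) :
    ((Matrix.of fun (i : Fin s) (p : Fin c) => (nIP n comp i p : ℝ)).transpose *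
          ((1 : Matrix (Fin s) (Fin s) ℝ) - (Matrix.of fun _ _ => (1 : ℝ) : Matrix (Fin s) (Fin s) ℝ)) *
          (Matrix.of fun (i : Fin s) (p : Fin c) => (nIP n comp i p : ℝ))) p q =
      (∑ i, (nIP n comp i p : ℝ) * (nIP n comp i q : ℝ)) -
        (mP n comp p : ℝ) * (mP n comp q : ℝ) := by
  simp only [Matrix.mul_apply, Matrix.sub_apply, Matrix.one_apply, Matrix.transpose_apply,
    Matrix.of_apply, mul_sub, mul_ite, mul_one, mul_zero, Finset.sum_sub_distrib,
    Finset.sum_ite_eq, Finset.mem_univ, if_true, sub_mul, Finset.sum_mul]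
  rw [mP_real, mP_real, Finset.sum_mul]
  congr 1
  · simp [ite_mul, Finset.sum_ite_eq', Finset.mem_univ]
  · rw [Finset.sum_comm]
    simp [Finset.mul_sum]
end

/-- The Laplacian of the contracted multigraph `K_{n_1,…,n_s}/F` equals
`diag(α_1,…,α_c) + Nᵀ(I_s − J_s)N` where `N = (n_{ip})`. -/
theorem stmt_3 (s : ℕ) (hs : 2 ≤ s) (n : Fin s → ℕ) (hn : ∀ i, 1 ≤ n i)
    (F : SimpleGraph (Σ i, Fin (n i)))
    (hFG : F ≤ SimpleGraph.completeMultipartiteGraph (fun i => Fin (n i)))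
    (hF : F.IsAcyclic)
    (c : ℕ) (comp : (Σ i, Fin (n i)) → Fin c)
    (hcomp : ∀ u v, comp u = comp v ↔ F.Reachable u v)
    (hsurj : Function.Surjective comp) :
    LapCon n comp =
      Matrix.diagonal (alphaR n comp) +
        (Matrix.of fun (i : Fin s) (p : Fin c) => (nIP n comp i p : ℝ)).transpose *
          ((1 : Matrix (Fin s) (Fin s) ℝ) - (Matrix.of fun _ _ => (1 : ℝ) : Matrix (Fin s) (Fin s) ℝ)) *
          (Matrix.of fun (i : Fin s) (p : Fin c) => (nIP n comp i p : ℝ)) := by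
  classical
  ext p q
  rw [Matrix.add_apply, entry_eq, LapCon, Matrix.of_apply]
  by_cases hpq : p = q
  · subst hpq
    rw [if_pos rfl, Matrix.diagonal_apply_eq,
      Finset.sum_erase_eq_sub (Finset.mem_univ p)]
    have hsum : ∑ q', (wPQ n comp p q' : ℝ) =
        (mP n comp p : ℝ) * (∑ i, (n i : ℝ)) - ∑ i, (n i : ℝ) * (nIP n comp i p : ℝ) := by
      simp_rw [wPQ_real]
      rw [Finset.sum_sub_distrib, ← Finset.mul_sum, mP_total, Finset.sum_comm]
      congr 1
      refine Finset.sum_congr rfl fun i _ => ?_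
      rw [← Finset.mul_sum, nIP_real, mul_comm]
    rw [hsum, wPQ_real, alphaR]
    ring
  · rw [if_neg hpq, Matrix.diagonal_apply_ne _ hpq, wPQ_real]
    ring
end

section
/- With D the s×s matrix whose (i,j) entry is d_{ij} = −Σ_{p=1}^c n_{jp}(m_p − n_{ip})/α_p², and with adj(Z(0)) = γ(n·e − b)bᵀ, the trace identity tr(−adj(Z(0))·D) = c·γ holds. -/
open Finset

/-- The matrix `Z(0) = I_s − (Σ_p n_{jp}(m_p − n_{ip})/α_p)_{i,j}`. -/
noncomputable def Zzero {s c : ℕ} (n : Fin s → ℕ) (comp : (Σ i, Fin (n i)) → Fin c) :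
    Matrix (Fin s) (Fin s) ℝ :=
  1 - Matrix.of fun i j =>
    ∑ p, (nIP n comp j p : ℝ) * ((mP n comp p : ℝ) - (nIP n comp i p : ℝ)) / alphaR n comp p

/-- `D` is the derivative of `Z(x)` at `x = 0`, with entries
`d_{ij} = −Σ_p n_{jp}(m_p − n_{ip})/α_p²`. -/
noncomputable def Dmat {s c : ℕ} (n : Fin s → ℕ) (comp : (Σ i, Fin (n i)) → Fin c) :
    Matrix (Fin s) (Fin s) ℝ :=
  Matrix.of fun i j =>
    -∑ p, (nIP n comp j p : ℝ) * ((mP n comp p : ℝ) - (nIP n comp i p : ℝ)) /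
      (alphaR n comp p) ^ 2

lemma sum_nIP' {s c : ℕ} (n : Fin s → ℕ) (comp : (Σ i, Fin (n i)) → Fin c) (p : Fin c) :
    ∑ i, nIP n comp i p = mP n comp p := by
  classical
  simp only [nIP, mP, Nat.card_eq_fintype_card, Fintype.card_subtype]
  rw [Finset.card_eq_sum_card_fiberwise (f := fun v => v.1) (t := Finset.univ)
    (fun _ _ => mem_univ _)]
  refine (Finset.sum_congr rfl fun i _ => ?_).symm
  rw [Finset.filter_filter]
  congr 1
  ext v
  simp [mem_filter, and_comm]

lemma sum_nIP {s c : ℕ} (n : Fin s → ℕ) (comp : (Σ i, Fin (n i)) → Fin c) (p : Fin c) :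
    ∑ i, (nIP n comp i p : ℝ) = (mP n comp p : ℝ) := by
  rw [← sum_nIP' n comp p]; push_cast; ring

lemma keyA {s c : ℕ} (n : Fin s → ℕ) (comp : (Σ i, Fin (n i)) → Fin c) (p : Fin c) :
    ∑ i, ((∑ k, (n k : ℝ)) - (n i : ℝ)) * (nIP n comp i p : ℝ) = alphaR n comp p := by
  rw [alphaR, ← sum_nIP n comp p, Finset.mul_sum, ← Finset.sum_sub_distrib]
  exact Finset.sum_congr rfl fun i _ => by ring

lemma keyB {s c : ℕ} (n : Fin s → ℕ) (comp : (Σ i, Fin (n i)) → Fin c) (p : Fin c) :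
    ∑ j, (n j : ℝ) * ((mP n comp p : ℝ) - (nIP n comp j p : ℝ)) = alphaR n comp p := by
  rw [alphaR, Finset.sum_mul, ← Finset.sum_sub_distrib]
  exact Finset.sum_congr rfl fun j _ => by ring

lemma alpha_pos {s c : ℕ} (hs : 2 ≤ s) (n : Fin s → ℕ) (hn : ∀ i, 1 ≤ n i)
    (comp : (Σ i, Fin (n i)) → Fin c) (hsurj : Function.Surjective comp) (p : Fin c) :
    0 < alphaR n comp p := by
  rw [← keyA n comp p]
  have hNi : ∀ i : Fin s, (n i : ℝ) < ∑ k, (n k : ℝ) := by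
    intro i
    have : Nontrivial (Fin s) := Fin.nontrivial_iff_two_le.mpr hs
    obtain ⟨j, hj⟩ := exists_ne i
    refine Finset.single_lt_sum (f := fun k => (n k : ℝ)) hj (mem_univ i) (mem_univ j) ?_ ?_
    · exact_mod_cast hn j
    · intro k _ _; positivity
  obtain ⟨v, hv⟩ := hsurj p
  refine Finset.sum_pos' (fun i _ => ?_) ⟨v.1, mem_univ _, ?_⟩
  · exact mul_nonneg (by linarith [hNi i]) (Nat.cast_nonneg _)
  · have h1 : 0 < nIP n comp v.1 p := by
      rw [nIP]
      exact Nat.card_pos_iff.mpr ⟨⟨v, rfl, hv⟩, Subtype.finite⟩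
    have h2 : (0:ℝ) < nIP n comp v.1 p := by exact_mod_cast h1
    exact mul_pos (by linarith [hNi v.1]) h2

/-- If `adj(Z(0)) = γ(n·e − b)bᵀ`, then `tr(−adj(Z(0))·D) = c·γ`. -/
theorem stmt_15 (s : ℕ) (hs : 2 ≤ s) (n : Fin s → ℕ) (hn : ∀ i, 1 ≤ n i)
    (F : SimpleGraph (Σ i, Fin (n i)))
    (hFG : F ≤ SimpleGraph.completeMultipartiteGraph (fun i => Fin (n i)))
    (hF : F.IsAcyclic)
    (c : ℕ) (comp : (Σ i, Fin (n i)) → Fin c)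
    (hcomp : ∀ u v, comp u = comp v ↔ F.Reachable u v)
    (hsurj : Function.Surjective comp)
    (γ : ℝ)
    (hadj : (Zzero n comp).adjugate =
      γ • Matrix.vecMulVec (fun i => (∑ k, (n k : ℝ)) - (n i : ℝ)) (fun j => (n j : ℝ))) :
    Matrix.trace (-((Zzero n comp).adjugate * Dmat n comp)) = c * γ := by
  have hA : ∀ p, alphaR n comp p ≠ 0 := fun p => (alpha_pos hs n hn comp hsurj p).ne'
  rw [hadj, Matrix.trace_neg, Matrix.smul_mul, Matrix.trace_smul]
  have hT : Matrix.trace (Matrix.vecMulVec (fun i => (∑ k, (n k : ℝ)) - (n i : ℝ))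
      (fun j => (n j : ℝ)) * Dmat n comp) = -(c : ℝ) := by
    rw [Matrix.trace]
    simp only [Matrix.diag_apply, Matrix.mul_apply, Matrix.vecMulVec_apply, Dmat,
      Matrix.of_apply, mul_neg, Finset.sum_neg_distrib, Finset.mul_sum]
    rw [← Finset.sum_neg_distrib]
    have key : ∑ i, ∑ j, ∑ p, ((∑ k, (n k : ℝ)) - (n i : ℝ)) * (n j : ℝ) *
        ((nIP n comp i p : ℝ) * ((mP n comp p : ℝ) - (nIP n comp j p : ℝ)) /
          (alphaR n comp p) ^ 2) = (c : ℝ) := by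
      have step1 : ∀ i : Fin s, ∑ j, ∑ p, ((∑ k, (n k : ℝ)) - (n i : ℝ)) * (n j : ℝ) *
          ((nIP n comp i p : ℝ) * ((mP n comp p : ℝ) - (nIP n comp j p : ℝ)) /
            (alphaR n comp p) ^ 2)
          = ∑ p, ∑ j, ((∑ k, (n k : ℝ)) - (n i : ℝ)) * (n j : ℝ) *
          ((nIP n comp i p : ℝ) * ((mP n comp p : ℝ) - (nIP n comp j p : ℝ)) /
            (alphaR n comp p) ^ 2) := fun i => Finset.sum_comm
      rw [Finset.sum_congr rfl (fun i _ => step1 i), Finset.sum_comm]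
      have step2 : ∀ p : Fin c, ∑ i, ∑ j, ((∑ k, (n k : ℝ)) - (n i : ℝ)) * (n j : ℝ) *
          ((nIP n comp i p : ℝ) * ((mP n comp p : ℝ) - (nIP n comp j p : ℝ)) /
            (alphaR n comp p) ^ 2)
          = (∑ i, ((∑ k, (n k : ℝ)) - (n i : ℝ)) * (nIP n comp i p : ℝ)) *
            (∑ j, (n j : ℝ) * ((mP n comp p : ℝ) - (nIP n comp j p : ℝ))) /
            (alphaR n comp p) ^ 2 := by
        intro p
        rw [Finset.sum_mul, Finset.sum_div]
        refine Finset.sum_congr rfl fun i _ => ?_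
        rw [Finset.mul_sum, Finset.sum_div]
        refine Finset.sum_congr rfl fun j _ => ?_
        ring
      rw [Finset.sum_congr rfl (fun p _ => step2 p)]
      have step3 : ∀ p : Fin c, (∑ i, ((∑ k, (n k : ℝ)) - (n i : ℝ)) * (nIP n comp i p : ℝ)) *
          (∑ j, (n j : ℝ) * ((mP n comp p : ℝ) - (nIP n comp j p : ℝ))) /
            (alphaR n comp p) ^ 2 = 1 := by
        intro p
        rw [keyA, keyB, ← sq, div_self (pow_ne_zero 2 (hA p))]
      rw [Finset.sum_congr rfl (fun p _ => step3 p)]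
      simp
    simp only [Finset.sum_neg_distrib]
    rw [← key]
  rw [hT, smul_eq_mul]
  ring
end
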